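/- Let A, B : [0,1] → ℝ be continuous and suppose the Abel equation x' = A(t)x³ + B(t)x² has a center at x = 0. Then ∫₀¹ B(t) dt = 0, ∫₀¹ A(t) dt = 0, and ∫₀¹ A(t)(∫₀ᵗ B(s) ds) dt = 0. -/

import Mathlib

open Set intervalIntegral MeasureTheory Filter Real Topology

namespace AbelCenterAux

lemma eq_zero_of_abs_le_mul (X C ε : ℝ) (hε : 0 < ε)
    (h : ∀ ρ : ℝ, 0 < ρ → ρ < ε → |X| ≤ C * ρ) : X = 0 := by
  by_contra hX
  have hX' : 0 < |X| := abs_pos.2 hX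
  have hC : 0 ≤ C := by
    have := h (ε / 2) (by linarith) (by linarith)
    nlinarith
  set ρ := min (ε / 2) (|X| / (2 * (C + 1))) with hρdef
  have hρ0 : 0 < ρ := lt_min (by linarith) (by positivity)
  have hρε : ρ < ε := lt_of_le_of_lt (min_le_left _ _) (by linarith)
  have h2 := h ρ hρ0 hρε
  have h3 : ρ ≤ |X| / (2 * (C + 1)) := min_le_right _ _
  have h5 : C * ρ ≤ C * (|X| / (2 * (C + 1))) := mul_le_mul_of_nonneg_left h3 hC
  have hd : (0:ℝ) < 2 * (C + 1) := by linarith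
  have h6 : C * (|X| / (2 * (C + 1))) < |X| := by
    rw [mul_div_assoc'] at *
    rw [div_lt_iff₀ hd]
    nlinarith
  linarith

noncomputable def cl (t : ℝ) : ℝ := max 0 (min 1 t)

lemma cl_mem (t : ℝ) : cl t ∈ Icc (0:ℝ) 1 := by
  constructor
  · exact le_max_left _ _
  · simp only [cl, max_le_iff]
    exact ⟨zero_le_one, min_le_left _ _⟩

lemma cl_eq {t : ℝ} (ht : t ∈ Icc (0:ℝ) 1) : cl t = t := by
  simp only [cl]
  rw [min_eq_right ht.2, max_eq_right ht.1]

lemma continuous_cl : Continuous cl :=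
  continuous_const.max (continuous_const.min continuous_id)

noncomputable def H (a b g : ℝ → ℝ) (t : ℝ) : ℝ := ∫ s in (0:ℝ)..t, (b s + a s * g s)

variable {a b g : ℝ → ℝ}

lemma H_hasDerivAt (ha : Continuous a) (hb : Continuous b) (hg : Continuous g) (t : ℝ) :
    HasDerivAt (H a b g) (b t + a t * g t) t :=
  ((hb.add (ha.mul hg)).integral_hasStrictDerivAt 0 t).hasDerivAt

lemma H_continuous (ha : Continuous a) (hb : Continuous b) (hg : Continuous g) :
    Continuous (H a b g) :=
  continuous_iff_continuousAt.2 fun t => (H_hasDerivAt ha hb hg t).continuousAt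

lemma prim_continuous {f : ℝ → ℝ} (hf : Continuous f) :
    Continuous (fun t => ∫ s in (0:ℝ)..t, f s) :=
  continuous_iff_continuousAt.2 fun t =>
    ((hf.integral_hasStrictDerivAt 0 t).hasDerivAt).continuousAt

lemma integral_bound {f : ℝ → ℝ} {C : ℝ} {t : ℝ} (ht : t ∈ Icc (0:ℝ) 1) (hC : 0 ≤ C)
    (hf : ∀ x ∈ Icc (0:ℝ) 1, |f x| ≤ C) : |∫ s in (0:ℝ)..t, f s| ≤ C := by
  have hb1 : ∀ x ∈ Set.uIoc (0:ℝ) t, ‖f x‖ ≤ C := by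
    intro x hx
    rw [uIoc_of_le ht.1] at hx
    exact hf x ⟨le_of_lt hx.1, le_trans hx.2 ht.2⟩
  have := intervalIntegral.norm_integral_le_of_norm_le_const hb1
  rw [Real.norm_eq_abs, sub_zero, abs_of_nonneg ht.1] at this
  calc |∫ s in (0:ℝ)..t, f s| ≤ C * t := this
    _ ≤ C := by nlinarith [ht.2]

lemma relation (ha : Continuous a) (hb : Continuous b) (hg : Continuous g) (ρ : ℝ)
    (hsol : ∀ t ∈ Icc (0:ℝ) 1,
      HasDerivWithinAt g (a t * g t ^ 3 + b t * g t ^ 2) (Icc (0:ℝ) 1) t)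
    (h0 : g 0 = ρ) :
    ∀ t ∈ Icc (0:ℝ) 1, g t * (1 - ρ * H a b g t) = ρ := by
  set G : ℝ → ℝ := fun t => g t * (1 - ρ * H a b g t) - ρ with hGdef
  set c : ℝ → ℝ := fun t => (a t * g t + b t) * g t with hcdef
  obtain ⟨K, hK⟩ := (isCompact_Icc (a := (0:ℝ)) (b := 1)).exists_bound_of_continuousOn
    (f := c) (((ha.mul hg).add hb).mul hg).continuousOn
  have hHc := H_continuous ha hb hg
  have hGcont : ContinuousOn G (Icc (0:ℝ) 1) :=
    ((hg.mul (continuous_const.sub (continuous_const.mul hHc))).sub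
      continuous_const).continuousOn
  have hG0 : G 0 = 0 := by
    simp [hGdef, H, intervalIntegral.integral_same, h0]
  have hGderiv : ∀ x ∈ Ico (0:ℝ) 1, HasDerivWithinAt G (c x * G x) (Ici x) x := by
    intro x hx
    have hx1 : x ∈ Icc (0:ℝ) 1 := Ico_subset_Icc_self hx
    have hmem : Icc (0:ℝ) 1 ∈ 𝓝[Ici x] x := by
      refine Filter.mem_of_superset (Icc_mem_nhdsGE_of_mem ⟨le_refl x, hx.2⟩) ?_
      exact Icc_subset_Icc hx.1 le_rfl
    have hg' : HasDerivWithinAt g (a x * g x ^ 3 + b x * g x ^ 2) (Ici x) x :=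
      (hsol x hx1).mono_of_mem_nhdsWithin hmem
    have hH' : HasDerivWithinAt (H a b g) (b x + a x * g x) (Ici x) x :=
      (H_hasDerivAt ha hb hg x).hasDerivWithinAt
    have hd : HasDerivWithinAt G
        ((a x * g x ^ 3 + b x * g x ^ 2) * (1 - ρ * H a b g x)
          + g x * (-(ρ * (b x + a x * g x)))) (Ici x) x := by
      exact (hg'.mul ((hH'.const_mul ρ).const_sub 1)).sub_const ρ
    convert hd using 1
    simp only [hcdef, hGdef]
    ring
  have hbound : ∀ x ∈ Ico (0:ℝ) 1, ‖c x * G x‖ ≤ K * ‖G x‖ + 0 := by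
    intro x hx
    rw [add_zero, Real.norm_eq_abs, Real.norm_eq_abs, abs_mul]
    exact mul_le_mul_of_nonneg_right (hK x (Ico_subset_Icc_self hx)) (abs_nonneg _)
  have key := norm_le_gronwallBound_of_norm_deriv_right_le (δ := 0) hGcont hGderiv
    (by rw [hG0]; simp) hbound
  intro t ht
  have := key t ht
  rw [gronwallBound_ε0, zero_mul] at this
  have hGt : G t = 0 := by
    have h1 : |G t| ≤ 0 := this
    have h2 := abs_nonneg (G t)
    exact abs_eq_zero.mp (le_antisymm h1 h2)
  have h3 : g t * (1 - ρ * H a b g t) - ρ = 0 := hGt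
  linarith

lemma gbound (hg : Continuous g) {M : ℝ} (hM : 1 ≤ M)
    (haM : ∀ t, |a t| ≤ M) (hbM : ∀ t, |b t| ≤ M) {ρ : ℝ} (hρ : 0 < ρ)
    (hρM : ρ * (8 * M) ≤ 1)
    (rel : ∀ t ∈ Icc (0:ℝ) 1, g t * (1 - ρ * H a b g t) = ρ)
    (h0 : g 0 = ρ) :
    ∀ t ∈ Icc (0:ℝ) 1, |g t| ≤ 2 * ρ := by
  have hM0 : (0:ℝ) < M := lt_of_lt_of_le one_pos hM
  have hρ1 : ρ ≤ 1 / 8 := by nlinarith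
  by_contra hcon
  push_neg at hcon
  obtain ⟨t₀, ht₀, ht₀'⟩ := hcon
  set U : Set ℝ := Icc (0:ℝ) 1 ∩ {t | 2 * ρ ≤ |g t|} with hUdef
  have hUne : U.Nonempty := ⟨t₀, ht₀, le_of_lt ht₀'⟩
  have hUclosed : IsClosed U :=
    isClosed_Icc.inter (isClosed_le continuous_const hg.abs)
  have hUbdd : BddBelow U := ⟨0, fun x hx => hx.1.1⟩
  set τ := sInf U with hτdef
  have hτU : τ ∈ U := hUclosed.csInf_mem hUne hUbdd
  have hτIcc : τ ∈ Icc (0:ℝ) 1 := hτU.1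
  have hτge : 2 * ρ ≤ |g τ| := hτU.2
  have hlt : ∀ s ∈ Ico (0:ℝ) τ, |g s| ≤ 2 * ρ := by
    intro s hs
    by_contra hgs
    push_neg at hgs
    have hsU : s ∈ U := ⟨⟨hs.1, le_trans (le_of_lt hs.2) hτIcc.2⟩, le_of_lt hgs⟩
    exact absurd (csInf_le hUbdd hsU) (not_le.2 hs.2)
  have hclose : |g τ| ≤ 2 * ρ := by
    rcases eq_or_lt_of_le hτIcc.1 with h | h
    · rw [← h, h0, abs_of_pos hρ]; linarith
    · have hne : (𝓝[Iio τ] τ).NeBot := nhdsLT_neBot τ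
      refine le_of_tendsto (f := fun s => |g s|) (x := 𝓝[Iio τ] τ)
        ((hg.abs.tendsto τ).mono_left nhdsWithin_le_nhds) ?_
      have hmem : Ico (0:ℝ) τ ∈ 𝓝[Iio τ] τ := by
        rw [← Set.Ici_inter_Iio]
        exact Filter.inter_mem (mem_nhdsWithin_of_mem_nhds (Ici_mem_nhds h))
          self_mem_nhdsWithin
      exact Filter.eventually_iff_exists_mem.2 ⟨Ico 0 τ, hmem, hlt⟩
  have hbnd : ∀ s ∈ Icc (0:ℝ) τ, |g s| ≤ 2 * ρ := by
    intro s hs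
    rcases lt_or_eq_of_le hs.2 with h | h
    · exact hlt s ⟨hs.1, h⟩
    · rw [h]; exact hclose
  have hHτ : |H a b g τ| ≤ 2 * M := by
    have hb1 : ∀ x ∈ Set.uIoc (0:ℝ) τ, ‖b x + a x * g x‖ ≤ 2 * M := by
      intro x hx
      rw [uIoc_of_le hτIcc.1] at hx
      have hx' : x ∈ Icc (0:ℝ) τ := ⟨le_of_lt hx.1, hx.2⟩
      have h1 := hbM x
      have h2 := haM x
      have h3 := hbnd x hx'
      have h4 : |a x * g x| ≤ M * (2 * ρ) := by
        rw [abs_mul]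
        exact mul_le_mul h2 h3 (abs_nonneg _) (le_of_lt hM0)
      calc ‖b x + a x * g x‖ ≤ |b x| + |a x * g x| := abs_add_le _ _
        _ ≤ M + M * (2 * ρ) := add_le_add h1 h4
        _ ≤ 2 * M := by nlinarith
    have := intervalIntegral.norm_integral_le_of_norm_le_const hb1
    rw [Real.norm_eq_abs] at this
    calc |H a b g τ| ≤ 2 * M * |τ - 0| := this
      _ ≤ 2 * M := by
        rw [sub_zero, abs_of_nonneg hτIcc.1]
        nlinarith [hτIcc.2]
  have hρH : |ρ * H a b g τ| ≤ 1 / 4 := by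
    rw [abs_mul, abs_of_pos hρ]
    calc ρ * |H a b g τ| ≤ ρ * (2 * M) := mul_le_mul_of_nonneg_left hHτ (le_of_lt hρ)
      _ ≤ 1 / 4 := by nlinarith
  have h1 : (3:ℝ) / 4 ≤ |1 - ρ * H a b g τ| := by
    have := abs_sub_abs_le_abs_sub (1:ℝ) (ρ * H a b g τ)
    rw [abs_one] at this
    linarith
  have h2 := rel τ hτIcc
  have h3 : |g τ| * |1 - ρ * H a b g τ| = ρ := by
    rw [← abs_mul, h2, abs_of_pos hρ]
  nlinarith [abs_nonneg (g τ)]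

lemma perRho (ha : Continuous a) (hb : Continuous b) (hg : Continuous g)
    {M ρ : ℝ} (hM : 1 ≤ M)
    (haM : ∀ t, |a t| ≤ M) (hbM : ∀ t, |b t| ≤ M) (hρ : 0 < ρ) (hρM : ρ * (8 * M) ≤ 1)
    (hsol : ∀ t ∈ Icc (0:ℝ) 1,
      HasDerivWithinAt g (a t * g t ^ 3 + b t * g t ^ 2) (Icc (0:ℝ) 1) t)
    (h0 : g 0 = ρ) (hper : g 0 = g 1) :
    ∃ I1 P Q R : ℝ,
      (∫ t in (0:ℝ)..1, b t) + I1 = 0 ∧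
      I1 = ρ * (∫ t in (0:ℝ)..1, a t) + ρ * P ∧
      P = ρ * ((∫ t in (0:ℝ)..1, a t * ∫ s in (0:ℝ)..t, b s) + R) + ρ * Q ∧
      |I1| ≤ 2 * M * ρ ∧ |P| ≤ 4 * M ^ 2 * ρ ∧ |Q| ≤ 8 * M ^ 3 * ρ ∧ |R| ≤ 2 * M ^ 2 * ρ := by
  have hM0 : (0:ℝ) < M := lt_of_lt_of_le one_pos hM
  have hρ0 : ρ ≠ 0 := ne_of_gt hρ
  have hρ1 : ρ ≤ 1 / 8 := by nlinarith
  have rel := relation ha hb hg ρ hsol h0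
  have gbd := gbound hg hM haM hbM hρ hρM rel h0
  set HH := H a b g with hHHdef
  have hHc : Continuous HH := prim_continuous (hb.add (ha.mul hg))
  have Hbd : ∀ t ∈ Icc (0:ℝ) 1, |HH t| ≤ 2 * M := by
    intro t ht
    refine integral_bound ht (by nlinarith) ?_
    intro x hx
    have h4 : |a x * g x| ≤ M * (2 * ρ) := by
      rw [abs_mul]
      exact mul_le_mul (haM x) (gbd x hx) (abs_nonneg _) (le_of_lt hM0)
    calc |b x + a x * g x| ≤ |b x| + |a x * g x| := abs_add_le _ _
      _ ≤ M + M * (2 * ρ) := add_le_add (hbM x) h4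
      _ ≤ 2 * M := by nlinarith
  refine ⟨∫ t in (0:ℝ)..1, a t * g t,
          ∫ t in (0:ℝ)..1, a t * (g t * HH t),
          ∫ t in (0:ℝ)..1, a t * (g t * HH t ^ 2),
          ∫ t in (0:ℝ)..1, a t * ∫ s in (0:ℝ)..t, a s * g s, ?_, ?_, ?_, ?_, ?_, ?_, ?_⟩
  · have hH1 : HH 1 = 0 := by
      have hrel1 := rel 1 ⟨zero_le_one, le_rfl⟩
      rw [show g 1 = ρ by rw [← hper, h0]] at hrel1
      have h5 : ρ * ρ * HH 1 = 0 := by linear_combination -hrel1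
      have h6 : ρ * ρ ≠ 0 := mul_ne_zero hρ0 hρ0
      exact (mul_eq_zero.mp h5).resolve_left h6
    have hsplit : HH 1 = (∫ t in (0:ℝ)..1, b t) + ∫ t in (0:ℝ)..1, a t * g t := by
      rw [hHHdef]
      exact intervalIntegral.integral_add (hb.intervalIntegrable 0 1)
        ((ha.mul hg).intervalIntegrable 0 1)
    linarith [hsplit ▸ hH1]
  · have hcongr : EqOn (fun t => a t * g t)
        (fun t => ρ * a t + ρ * (a t * (g t * HH t))) (uIcc (0:ℝ) 1) := by
      rw [uIcc_of_le zero_le_one]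
      intro t ht
      simp only
      linear_combination a t * rel t ht
    rw [intervalIntegral.integral_congr hcongr,
      intervalIntegral.integral_add (f := fun t => ρ * a t) (g := fun t => ρ * (a t * (g t * HH t)))
        ((continuous_const.mul ha).intervalIntegrable 0 1)
        ((continuous_const.mul (ha.mul (hg.mul hHc))).intervalIntegrable 0 1),
      intervalIntegral.integral_const_mul, intervalIntegral.integral_const_mul]
  · have hcongr : EqOn (fun t => a t * (g t * HH t))
        (fun t => ρ * (a t * HH t) + ρ * (a t * (g t * HH t ^ 2))) (uIcc (0:ℝ) 1) := by
      rw [uIcc_of_le zero_le_one]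
      intro t ht
      simp only
      linear_combination a t * HH t * rel t ht
    rw [intervalIntegral.integral_congr hcongr,
      intervalIntegral.integral_add (f := fun t => ρ * (a t * HH t))
        (g := fun t => ρ * (a t * (g t * HH t ^ 2)))
        ((continuous_const.mul (ha.mul hHc)).intervalIntegrable 0 1)
        ((continuous_const.mul (ha.mul (hg.mul (hHc.pow 2)))).intervalIntegrable 0 1),
      intervalIntegral.integral_const_mul, intervalIntegral.integral_const_mul]
    congr 2
    have hHsplit : ∀ t, HH t = (∫ s in (0:ℝ)..t, b s) + ∫ s in (0:ℝ)..t, a s * g s := by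
      intro t
      rw [hHHdef]
      exact intervalIntegral.integral_add (hb.intervalIntegrable 0 t)
        ((ha.mul hg).intervalIntegrable 0 t)
    have : EqOn (fun t => a t * HH t)
        (fun t => (a t * ∫ s in (0:ℝ)..t, b s) + a t * ∫ s in (0:ℝ)..t, a s * g s)
          (uIcc (0:ℝ) 1) := by
      intro t ht
      simp only [hHsplit t]
      ring
    rw [intervalIntegral.integral_congr this,
      intervalIntegral.integral_add (f := fun t => a t * ∫ s in (0:ℝ)..t, b s)
        (g := fun t => a t * ∫ s in (0:ℝ)..t, a s * g s)
        ((ha.mul (prim_continuous hb)).intervalIntegrable 0 1)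
        ((ha.mul (prim_continuous (ha.mul hg))).intervalIntegrable 0 1)]
  · have : ∀ x ∈ Icc (0:ℝ) 1, |a x * g x| ≤ 2 * M * ρ := by
      intro x hx
      rw [abs_mul]
      calc |a x| * |g x| ≤ M * (2 * ρ) :=
            mul_le_mul (haM x) (gbd x hx) (abs_nonneg _) (le_of_lt hM0)
        _ = 2 * M * ρ := by ring
    exact integral_bound ⟨zero_le_one, le_rfl⟩ (by positivity) this
  · have : ∀ x ∈ Icc (0:ℝ) 1, |a x * (g x * HH x)| ≤ 4 * M ^ 2 * ρ := by
      intro x hx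
      rw [abs_mul, abs_mul]
      have h1 := haM x
      have h2 := gbd x hx
      have h3 := Hbd x hx
      have hc1 : |g x| * |HH x| ≤ (2 * ρ) * (2 * M) :=
        mul_le_mul h2 h3 (abs_nonneg _) (by positivity)
      calc |a x| * (|g x| * |HH x|) ≤ M * ((2 * ρ) * (2 * M)) :=
            mul_le_mul h1 hc1 (by positivity) (le_of_lt hM0)
        _ = 4 * M ^ 2 * ρ := by ring
    exact integral_bound ⟨zero_le_one, le_rfl⟩ (by positivity) this
  · have : ∀ x ∈ Icc (0:ℝ) 1, |a x * (g x * HH x ^ 2)| ≤ 8 * M ^ 3 * ρ := by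
      intro x hx
      rw [abs_mul, abs_mul, abs_pow]
      have h1 := haM x
      have h2 := gbd x hx
      have h3 := Hbd x hx
      have hp : |HH x| ^ 2 ≤ (2 * M) ^ 2 := pow_le_pow_left₀ (abs_nonneg _) h3 2
      have hc1 : |g x| * |HH x| ^ 2 ≤ (2 * ρ) * (2 * M) ^ 2 :=
        mul_le_mul h2 hp (by positivity) (by positivity)
      calc |a x| * (|g x| * |HH x| ^ 2) ≤ M * ((2 * ρ) * (2 * M) ^ 2) :=
            mul_le_mul h1 hc1 (by positivity) (le_of_lt hM0)
        _ = 8 * M ^ 3 * ρ := by ring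
    exact integral_bound ⟨zero_le_one, le_rfl⟩ (by positivity) this
  · have : ∀ x ∈ Icc (0:ℝ) 1, |a x * ∫ s in (0:ℝ)..x, a s * g s| ≤ 2 * M ^ 2 * ρ := by
      intro x hx
      rw [abs_mul]
      have h1 := haM x
      have h2 : |∫ s in (0:ℝ)..x, a s * g s| ≤ 2 * M * ρ := by
        refine integral_bound hx (by positivity) ?_
        intro y hy
        rw [abs_mul]
        calc |a y| * |g y| ≤ M * (2 * ρ) :=
              mul_le_mul (haM y) (gbd y hy) (abs_nonneg _) (le_of_lt hM0)
          _ = 2 * M * ρ := by ring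
      calc |a x| * |∫ s in (0:ℝ)..x, a s * g s| ≤ M * (2 * M * ρ) :=
            mul_le_mul h1 h2 (abs_nonneg _) (le_of_lt hM0)
        _ = 2 * M ^ 2 * ρ := by ring
    exact integral_bound ⟨zero_le_one, le_rfl⟩ (by positivity) this

end AbelCenterAux

/-- `γ : ℝ → ℝ` is a solution of the Abel equation `x' = A(t)x³ + B(t)x²` on `[0,1]`. -/
def IsAbelSolution (A B : ℝ → ℝ) (γ : ℝ → ℝ) : Prop :=
  ∀ t ∈ Set.Icc (0:ℝ) 1,
    HasDerivWithinAt γ (A t * γ t ^ 3 + B t * γ t ^ 2) (Set.Icc (0:ℝ) 1) t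

/-- The Abel equation has a center at `x = 0`: all solutions starting close enough
to `0` are defined on all of `[0,1]` and are periodic orbits. -/
def HasCenterAtZero (A B : ℝ → ℝ) : Prop :=
  ∃ ε > (0:ℝ), ∀ ρ : ℝ, |ρ| < ε →
    ∃ γ : ℝ → ℝ, IsAbelSolution A B γ ∧ γ 0 = ρ ∧ γ 0 = γ 1

theorem abel_center_necessary_conditions
    (A B : ℝ → ℝ)
    (hA : ContinuousOn A (Set.Icc 0 1)) (hB : ContinuousOn B (Set.Icc 0 1))
    (hcenter : HasCenterAtZero A B) :
    (∫ t in (0:ℝ)..1, B t) = 0 ∧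
    (∫ t in (0:ℝ)..1, A t) = 0 ∧
    (∫ t in (0:ℝ)..1, A t * (∫ s in (0:ℝ)..t, B s)) = 0 := by
  classical
  open AbelCenterAux in
  obtain ⟨Ma, hMa⟩ := isCompact_Icc.exists_bound_of_continuousOn hA
  obtain ⟨Mb, hMb⟩ := isCompact_Icc.exists_bound_of_continuousOn hB
  set M : ℝ := max 1 (max Ma Mb) with hMdef
  have hM : 1 ≤ M := le_max_left _ _
  have hM0 : (0:ℝ) < M := lt_of_lt_of_le one_pos hM
  set a : ℝ → ℝ := fun t => A (AbelCenterAux.cl t) with hadef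
  set b : ℝ → ℝ := fun t => B (AbelCenterAux.cl t) with hbdef
  have hacont : Continuous a := hA.comp_continuous AbelCenterAux.continuous_cl AbelCenterAux.cl_mem
  have hbcont : Continuous b := hB.comp_continuous AbelCenterAux.continuous_cl AbelCenterAux.cl_mem
  have haM : ∀ t, |a t| ≤ M := by
    intro t
    calc |a t| ≤ Ma := hMa _ (AbelCenterAux.cl_mem t)
      _ ≤ M := le_trans (le_max_left _ _) (le_max_right _ _)
  have hbM : ∀ t, |b t| ≤ M := by
    intro t
    calc |b t| ≤ Mb := hMb _ (AbelCenterAux.cl_mem t)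
      _ ≤ M := le_trans (le_max_right _ _) (le_max_right _ _)
  obtain ⟨ε, hε, hc⟩ := hcenter
  set δ : ℝ := min ε (1 / (8 * M)) with hδdef
  have hδ : 0 < δ := lt_min hε (by positivity)
  -- per-rho facts
  have fact : ∀ ρ : ℝ, 0 < ρ → ρ < δ →
      ∃ I1 P Q R : ℝ,
        (∫ t in (0:ℝ)..1, b t) + I1 = 0 ∧
        I1 = ρ * (∫ t in (0:ℝ)..1, a t) + ρ * P ∧
        P = ρ * ((∫ t in (0:ℝ)..1, a t * ∫ s in (0:ℝ)..t, b s) + R) + ρ * Q ∧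
        |I1| ≤ 2 * M * ρ ∧ |P| ≤ 4 * M ^ 2 * ρ ∧ |Q| ≤ 8 * M ^ 3 * ρ ∧ |R| ≤ 2 * M ^ 2 * ρ := by
    intro ρ h1 h2
    have hρε : |ρ| < ε := by
      rw [abs_of_pos h1]
      exact lt_of_lt_of_le h2 (min_le_left _ _)
    obtain ⟨γ, hγsol, hγ0, hγper⟩ := hc ρ hρε
    have hγcont : ContinuousOn γ (Set.Icc (0:ℝ) 1) :=
      fun t ht => (hγsol t ht).continuousWithinAt
    set g : ℝ → ℝ := fun t => γ (AbelCenterAux.cl t) with hgdef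
    have hgcont : Continuous g :=
      hγcont.comp_continuous AbelCenterAux.continuous_cl AbelCenterAux.cl_mem
    have hgeq : Set.EqOn g γ (Set.Icc (0:ℝ) 1) := by
      intro t ht
      simp only [hgdef, AbelCenterAux.cl_eq ht]
    have hsol' : ∀ t ∈ Set.Icc (0:ℝ) 1,
        HasDerivWithinAt g (a t * g t ^ 3 + b t * g t ^ 2) (Set.Icc (0:ℝ) 1) t := by
      intro t ht
      have h := hγsol t ht
      have h' : HasDerivWithinAt g (A t * γ t ^ 3 + B t * γ t ^ 2) (Set.Icc (0:ℝ) 1) t :=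
        h.congr hgeq (hgeq ht)
      have heq : A t * γ t ^ 3 + B t * γ t ^ 2 = a t * g t ^ 3 + b t * g t ^ 2 := by
        rw [hgeq ht]
        simp only [hadef, hbdef, AbelCenterAux.cl_eq ht]
      rwa [heq] at h'
    have hg0 : g 0 = ρ := by
      rw [hgeq ⟨le_refl 0, zero_le_one⟩, hγ0]
    have hgper : g 0 = g 1 := by
      rw [hgeq ⟨le_refl 0, zero_le_one⟩, hgeq ⟨zero_le_one, le_refl 1⟩]
      exact hγper
    have hρM : ρ * (8 * M) ≤ 1 := by
      have : ρ ≤ 1 / (8 * M) := le_of_lt (lt_of_lt_of_le h2 (min_le_right _ _))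
      rw [le_div_iff₀ (by positivity)] at this
      linarith
    exact AbelCenterAux.perRho hacont hbcont hgcont hM haM hbM h1 hρM hsol' hg0 hgper
  -- Step 1 : ∫ b = 0
  have hT1 : (∫ t in (0:ℝ)..1, b t) = 0 := by
    refine AbelCenterAux.eq_zero_of_abs_le_mul _ (2 * M) δ hδ ?_
    intro ρ h1 h2
    obtain ⟨I1, P, Q, R, e1, e2, e3, b1, b2, b3, b4⟩ := fact ρ h1 h2
    have : (∫ t in (0:ℝ)..1, b t) = -I1 := by linarith
    rw [this, abs_neg]
    exact b1
  -- Step 2 : ∫ a = 0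
  have hT2 : (∫ t in (0:ℝ)..1, a t) = 0 := by
    refine AbelCenterAux.eq_zero_of_abs_le_mul _ (4 * M ^ 2) δ hδ ?_
    intro ρ h1 h2
    obtain ⟨I1, P, Q, R, e1, e2, e3, b1, b2, b3, b4⟩ := fact ρ h1 h2
    have hI1 : I1 = 0 := by linarith
    have h5 : ρ * ((∫ t in (0:ℝ)..1, a t) + P) = 0 := by linarith [e2]; 
    have h6 : (∫ t in (0:ℝ)..1, a t) + P = 0 :=
      (mul_eq_zero.mp h5).resolve_left (ne_of_gt h1)
    have : (∫ t in (0:ℝ)..1, a t) = -P := by linarith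
    rw [this, abs_neg]
    exact b2
  -- Step 3 : ∫ a * ∫ b = 0
  have hT3 : (∫ t in (0:ℝ)..1, a t * ∫ s in (0:ℝ)..t, b s) = 0 := by
    refine AbelCenterAux.eq_zero_of_abs_le_mul _ (2 * M ^ 2 + 8 * M ^ 3) δ hδ ?_
    intro ρ h1 h2
    obtain ⟨I1, P, Q, R, e1, e2, e3, b1, b2, b3, b4⟩ := fact ρ h1 h2
    have hI1 : I1 = 0 := by linarith
    have h5 : ρ * ((∫ t in (0:ℝ)..1, a t) + P) = 0 := by
      rw [hT2]; rw [hT2] at e2; linarith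
    have h6 : (∫ t in (0:ℝ)..1, a t) + P = 0 :=
      (mul_eq_zero.mp h5).resolve_left (ne_of_gt h1)
    have hP : P = 0 := by rw [hT2] at h6; linarith
    have h7 : ρ * ((∫ t in (0:ℝ)..1, a t * ∫ s in (0:ℝ)..t, b s) + R + Q) = 0 := by
      linarith [e3]
    have h8 : (∫ t in (0:ℝ)..1, a t * ∫ s in (0:ℝ)..t, b s) + R + Q = 0 :=
      (mul_eq_zero.mp h7).resolve_left (ne_of_gt h1)
    have : (∫ t in (0:ℝ)..1, a t * ∫ s in (0:ℝ)..t, b s) = -(R + Q) := by linarith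
    rw [this, abs_neg]
    calc |R + Q| ≤ |R| + |Q| := abs_add_le _ _
      _ ≤ 2 * M ^ 2 * ρ + 8 * M ^ 3 * ρ := add_le_add b4 b3
      _ = (2 * M ^ 2 + 8 * M ^ 3) * ρ := by ring
  -- transfer back from a, b to A, B
  have hab : Set.EqOn b B (Set.uIcc (0:ℝ) 1) := by
    rw [Set.uIcc_of_le zero_le_one]
    intro t ht
    simp only [hbdef, AbelCenterAux.cl_eq ht]
  have haa : Set.EqOn a A (Set.uIcc (0:ℝ) 1) := by
    rw [Set.uIcc_of_le zero_le_one]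
    intro t ht
    simp only [hadef, AbelCenterAux.cl_eq ht]
  refine ⟨?_, ?_, ?_⟩
  · rw [← intervalIntegral.integral_congr hab]
    exact hT1
  · rw [← intervalIntegral.integral_congr haa]
    exact hT2
  · rw [show (∫ t in (0:ℝ)..1, A t * (∫ s in (0:ℝ)..t, B s))
        = ∫ t in (0:ℝ)..1, a t * ∫ s in (0:ℝ)..t, b s from ?_, hT3]
    apply intervalIntegral.integral_congr
    rw [Set.uIcc_of_le zero_le_one]
    intro t ht
    simp only
    rw [haa (by rw [Set.uIcc_of_le zero_le_one]; exact ht)]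
    congr 1
    apply intervalIntegral.integral_congr
    intro s hs
    have hs' : s ∈ Set.Icc (0:ℝ) 1 := by
      rw [Set.uIcc_of_le ht.1] at hs
      exact ⟨hs.1, le_trans hs.2 ht.2⟩
    exact (hab (by rw [Set.uIcc_of_le zero_le_one]; exact hs')).symm
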